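/- Let Ā = ⟨A_δ : δ ∈ Lim(ω₁)⟩ be such that each A_δ = {α_{δ,n} : n < ω} with the α_{δ,n} strictly increasing and cofinal in δ, and let ℚ = ℚ_Ā be the associated partial order. Then ℚ has ℵ₁ as a precaliber: for every family {p_i : i < ω₁} of conditions in ℚ there exists an uncountable X ⊆ ω₁ such that {p_i : i ∈ X} is centered, i.e., every finite subset of {p_i : i ∈ X} has a common extension in ℚ. -/

import Mathlib

open Filter Set

noncomputable def omega1 : Ordinal.{0} := (Cardinal.aleph 1).ord

/-- The set of countable limit ordinals, `Lim(ω₁)`. -/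
def limOmega1 : Set Ordinal.{0} := {δ | δ < omega1 ∧ Order.IsSuccLimit δ}

/-- `C` is a closed unbounded subset of `ω₁`. -/
def IsClubIn (C : Set Ordinal.{0}) : Prop :=
  C ⊆ Set.Iio omega1 ∧
  (∀ δ, δ < omega1 → Order.IsSuccLimit δ → (∀ β < δ, ∃ γ ∈ C, β < γ ∧ γ < δ) → δ ∈ C) ∧
  (∀ β, β < omega1 → ∃ γ ∈ C, β < γ)

/-- `S` is a stationary subset of `ω₁`. -/
def IsStatIn (S : Set Ordinal.{0}) : Prop :=
  S ⊆ Set.Iio omega1 ∧ ∀ C, IsClubIn C → (S ∩ C).Nonempty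

open scoped Classical in
/-- `|{k < n : α k ∈ A}| / n` as a real number. -/
noncomputable def hitRatio (α : ℕ → Ordinal.{0}) (A : Set Ordinal.{0}) (n : ℕ) : ℝ :=
  ((Finset.range n).filter (fun k => α k ∈ A)).card / n

/-- `α` assigns to each `δ ∈ S` a strictly increasing sequence cofinal in `δ`. -/
def GoodSeq (S : Set Ordinal.{0}) (α : Ordinal.{0} → ℕ → Ordinal.{0}) : Prop :=
  ∀ δ ∈ S, StrictMono (α δ) ∧ (∀ n, α δ n < δ) ∧ (∀ β < δ, ∃ n, β < α δ n)

/-- The principle `♣_S^{inf ≥ a}`. -/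
def ClubSuitInf (S : Set Ordinal.{0}) (a : ℝ) : Prop :=
  ∃ α : Ordinal.{0} → ℕ → Ordinal.{0}, GoodSeq S α ∧
    ∀ A : Set Ordinal.{0}, A ⊆ Set.Iio omega1 → ¬ A.Countable →
      ∃ δ ∈ S, a ≤ Filter.liminf (hitRatio (α δ) A) Filter.atTop

/-- The principle `♣_S^{sup ≥ a}`. -/
def ClubSuitSup (S : Set Ordinal.{0}) (a : ℝ) : Prop :=
  ∃ α : Ordinal.{0} → ℕ → Ordinal.{0}, GoodSeq S α ∧
    ∀ A : Set Ordinal.{0}, A ⊆ Set.Iio omega1 → ¬ A.Countable →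
      ∃ δ ∈ S, a ≤ Filter.limsup (hitRatio (α δ) A) Filter.atTop

/-- The diamond principle `◊` on `ω₁`. -/
def DiamondOmega1 : Prop :=
  ∃ B : Ordinal.{0} → Set Ordinal.{0}, (∀ δ ∈ limOmega1, B δ ⊆ Set.Iio δ) ∧
    ∀ A : Set Ordinal.{0}, A ⊆ Set.Iio omega1 →
      IsStatIn {δ ∈ limOmega1 | A ∩ Set.Iio δ = B δ}

/-- A condition of the forcing `ℚ_Ā` (Definition 8.3): a finite partial function
`f : ω₁ → {0,1}` (coded via `Option Bool`), a finite set `u` of countable limit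
ordinals, and rationals `ε_δ ∈ (0,1)` for `δ ∈ u`. -/
structure QACond where
  f : Ordinal.{0} → Option Bool
  u : Finset Ordinal.{0}
  ε : Ordinal.{0} → ℚ
  f_finite : {x | f x ≠ none}.Finite
  f_dom : ∀ x, f x ≠ none → x < omega1
  u_lim : ∀ δ ∈ u, δ ∈ limOmega1
  ε_pos : ∀ δ ∈ u, 0 < ε δ
  ε_lt_one : ∀ δ ∈ u, ε δ < 1

open scoped Classical in
/-- The order of `ℚ_Ā`: `q` extends `p` iff `f_q ⊇ f_p`, `u_q ⊇ u_p`, `ε̄_q` extends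
`ε̄_p`, and for each `δ ∈ u_p`, on the set `W` of indices `n` with `α_{δ,n}` newly in
the domain, every initial segment `W ∩ [0,N)` is either empty or carries a proportion
of `1`'s at most `1 - ε_{p,δ}`. -/
def QAle (α : Ordinal.{0} → ℕ → Ordinal.{0}) (p q : QACond) : Prop :=
  (∀ x, p.f x ≠ none → q.f x = p.f x) ∧
  p.u ⊆ q.u ∧
  (∀ δ ∈ p.u, q.ε δ = p.ε δ) ∧
  ∀ δ ∈ p.u, ∀ N : ℕ,
    ((Finset.range N).filter (fun n => q.f (α δ n) ≠ none ∧ p.f (α δ n) = none) = ∅) ∨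
    ((((Finset.range N).filter
        (fun n => q.f (α δ n) = some true ∧ p.f (α δ n) = none)).card : ℚ) ≤
      (1 - p.ε δ) *
      (((Finset.range N).filter
        (fun n => q.f (α δ n) ≠ none ∧ p.f (α δ n) = none)).card : ℚ))


open scoped Classical

-- countability lemmas



lemma QAaux_lt_omega1 {β : Ordinal.{0}} : β < omega1 ↔ β.card ≤ Cardinal.aleph0 := by
  rw [omega1, Cardinal.lt_ord, ← Cardinal.succ_aleph0, Order.lt_succ_iff]

lemma QAaux_not_countable_Iio : ¬ (Set.Iio omega1).Countable := by
  rw [Cardinal.countable_iff_lt_aleph_one, Ordinal.mk_Iio_ordinal]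
  simp [omega1]

lemma QAaux_countable_Iio {β : Ordinal.{0}} (h : β < omega1) : (Set.Iio β).Countable := by
  rw [Cardinal.countable_iff_lt_aleph_one, Ordinal.mk_Iio_ordinal]
  rw [omega1, Cardinal.lt_ord] at h
  exact lt_of_lt_of_le (Cardinal.lift_lt.2 h) (by simp)

lemma QAaux_countable_Iic {β : Ordinal.{0}} (h : β < omega1) : (Set.Iic β).Countable := by
  have h2 : Set.Iic β = Set.Iio (β+1) := by ext x; simp [Order.lt_succ_iff]
  rw [h2]
  refine QAaux_countable_Iio ?_
  rw [QAaux_lt_omega1] at h ⊢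
  calc (β+1).card ≤ β.card + 1 := by
        rw [Ordinal.card_add]; simp
    _ ≤ Cardinal.aleph0 + 1 := by gcongr
    _ = Cardinal.aleph0 := by simp

lemma QAaux_succ_lt {β : Ordinal.{0}} (h : β < omega1) : β + 1 < omega1 := by
  rw [QAaux_lt_omega1] at h ⊢
  calc (β+1).card ≤ β.card + 1 := by rw [Ordinal.card_add]; simp
    _ ≤ Cardinal.aleph0 + 1 := by gcongr
    _ = Cardinal.aleph0 := by simp




section
variable {σ : Type*}

lemma QAaux_uncountable_diff {S T : Set σ} (hS : ¬ S.Countable) (hT : T.Countable) :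
    ¬ (S \ T).Countable := by
  intro h
  exact hS ((h.union hT).mono (by intro x hx; by_cases hx2 : x ∈ T <;> simp [hx, hx2]))

lemma QAaux_pigeon {ι : Type*} [Countable ι] {S : Set σ} (hS : ¬ S.Countable)
    (g : σ → ι) : ∃ v, ¬ {i | i ∈ S ∧ g i = v}.Countable := by
  by_contra h
  push_neg at h
  refine hS ((Set.countable_iUnion (fun v : ι => h v)).mono ?_)
  intro i hi
  exact Set.mem_iUnion.2 ⟨g i, ⟨hi, rfl⟩⟩

end

lemma QAaux_exists_bound {T : Set Ordinal.{0}} (hT : T.Countable)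
    (hT2 : ∀ x ∈ T, x < omega1) : ∃ b, b < omega1 ∧ ∀ x ∈ T, x < b := by
  by_contra h
  push_neg at h
  have hcov : Set.Iio omega1 ⊆ ⋃ x ∈ T, Set.Iic x := by
    intro y hy
    obtain ⟨x, hx, hxy⟩ := h y hy
    exact Set.mem_biUnion hx hxy
  exact QAaux_not_countable_Iio
    ((Set.Countable.biUnion hT (fun x hx => QAaux_countable_Iic (hT2 x hx))).mono hcov)




lemma QAaux_count_hit {S : Set Ordinal.{0}} {B : Ordinal.{0} → Finset Ordinal.{0}}
    (hdisj : ∀ i ∈ S, ∀ j ∈ S, i ≠ j → B i ∩ B j = ∅) {W : Set Ordinal.{0}} (hW : W.Countable) :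
    {i | i ∈ S ∧ ∃ x ∈ B i, x ∈ W}.Countable := by
  have hsub : {i | i ∈ S ∧ ∃ x ∈ B i, x ∈ W} ⊆ ⋃ x ∈ W, {i | i ∈ S ∧ x ∈ B i} := by
    intro i ⟨hi, x, hx, hxW⟩
    exact Set.mem_biUnion hxW ⟨hi, hx⟩
  refine (Set.Countable.biUnion hW fun x _ => ?_).mono hsub
  refine Set.Subsingleton.countable ?_
  intro i hi j hj
  by_contra hne
  have h1 := hdisj i hi.1 j hj.1 hne
  have h2 : x ∈ B i ∩ B j := Finset.mem_inter.2 ⟨hi.2, hj.2⟩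
  rw [h1] at h2
  exact absurd h2 (Finset.notMem_empty x)

lemma QAaux_delta (d : Ordinal.{0} → Finset Ordinal.{0}) {S : Set Ordinal.{0}}
    (hS : ¬ S.Countable) :
    ∃ S' R, S' ⊆ S ∧ ¬ S'.Countable ∧ (∀ i ∈ S', R ⊆ d i) ∧
      ∀ i ∈ S', ∀ j ∈ S', i ≠ j → d i ∩ d j = R := by
  obtain ⟨n, hn⟩ := QAaux_pigeon hS (fun i => (d i).card)
  have H : ∀ (n : ℕ) (d : Ordinal.{0} → Finset Ordinal.{0}) (S : Set Ordinal.{0}),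
      ¬ S.Countable → (∀ i ∈ S, (d i).card ≤ n) →
      ∃ S' R, S' ⊆ S ∧ ¬ S'.Countable ∧ (∀ i ∈ S', R ⊆ d i) ∧
      ∀ i ∈ S', ∀ j ∈ S', i ≠ j → d i ∩ d j = R := by
    intro n
    induction n with
    | zero =>
      intro d S hS hcard
      refine ⟨S, ∅, subset_rfl, hS, by simp, fun i hi j hj hne => ?_⟩
      have : d i = ∅ := Finset.card_eq_zero.1 (Nat.le_zero.1 (hcard i hi))
      simp [this]
    | succ n IH =>
      intro d S hS hcard
      by_cases hpop : ∃ x, ¬ {i | i ∈ S ∧ x ∈ d i}.Countable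
      · obtain ⟨x, hx⟩ := hpop
        obtain ⟨S', R', h1, h2, h3, h4⟩ := IH (fun i => (d i).erase x)
          {i | i ∈ S ∧ x ∈ d i} hx (fun i hi => by
            rw [Finset.card_erase_of_mem hi.2]
            have := hcard i hi.1; omega)
        refine ⟨S', insert x R', fun i hi => (h1 hi).1, h2, ?_, ?_⟩
        · intro i hi
          refine Finset.insert_subset (h1 hi).2 ((h3 i hi).trans (Finset.erase_subset _ _))
        · intro i hi j hj hne
          have h5 := h4 i hi j hj hne
          ext y
          simp only [Finset.mem_inter, Finset.mem_insert]
          constructor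
          · rintro ⟨hyi, hyj⟩
            by_cases hyx : y = x
            · exact Or.inl hyx
            · refine Or.inr ?_
              have : y ∈ (d i).erase x ∩ (d j).erase x :=
                Finset.mem_inter.2 ⟨Finset.mem_erase.2 ⟨hyx, hyi⟩, Finset.mem_erase.2 ⟨hyx, hyj⟩⟩
              rwa [h5] at this
          · rintro (rfl | hyR)
            · exact ⟨(h1 hi).2, (h1 hj).2⟩
            · have hyi := h3 i hi hyR
              have hyj := h3 j hj hyR
              exact ⟨(Finset.erase_subset _ _) hyi, (Finset.erase_subset _ _) hyj⟩
      · push_neg at hpop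
        -- Zorn argument
        set A : Set (Set Ordinal.{0}) :=
          {T | T ⊆ S ∧ ∀ i ∈ T, ∀ j ∈ T, i ≠ j → d i ∩ d j = ∅} with hA
        obtain ⟨m, -, hm⟩ := zorn_subset_nonempty A (fun c hc hchain _ => by
          refine ⟨⋃₀ c, ⟨?_, ?_⟩, fun s hs => Set.subset_sUnion_of_mem hs⟩
          · intro x ⟨s, hs, hxs⟩
            exact (hc hs).1 hxs
          · rintro i ⟨s, hs, his⟩ j ⟨t, ht, hjt⟩ hne
            rcases hchain.total hs ht with hst | hts
            · exact (hc ht).2 i (hst his) j hjt hne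
            · exact (hc hs).2 i his j (hts hjt) hne) ∅ ⟨Set.empty_subset _, by simp⟩
        by_cases hmc : m.Countable
        · exfalso
          have hU : (⋃ i ∈ m, (↑(d i) : Set Ordinal.{0})).Countable :=
            Set.Countable.biUnion hmc (fun i _ => (d i).countable_toSet)
          have hBad : (⋃ x ∈ (⋃ i ∈ m, (↑(d i) : Set Ordinal.{0})),
              {i | i ∈ S ∧ x ∈ d i}).Countable :=
            Set.Countable.biUnion hU (fun x _ => hpop x)
          have hne : (S \ ((⋃ x ∈ (⋃ i ∈ m, (↑(d i) : Set Ordinal.{0})),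
              {i | i ∈ S ∧ x ∈ d i}) ∪ m)).Nonempty := by
            rw [Set.nonempty_iff_ne_empty]
            intro hemp
            exact (QAaux_uncountable_diff hS (hBad.union hmc)) (by rw [hemp]; exact Set.countable_empty)
          obtain ⟨i0, hi0S, hi0n⟩ := hne
          have hmem : insert i0 m ∈ A := by
            constructor
            · exact Set.insert_subset hi0S hm.1.1
            · intro i hi j hj hne2
              have key : ∀ k ∈ m, d i0 ∩ d k = ∅ := by
                intro k hk
                rw [Finset.eq_empty_iff_forall_notMem]
                intro y hy
                rw [Finset.mem_inter] at hy
                refine hi0n (Set.mem_union_left _ ?_)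
                refine Set.mem_biUnion (Set.mem_biUnion hk hy.2) ⟨hi0S, hy.1⟩
              rcases hi with rfl | hi
              · rcases hj with rfl | hj
                · exact absurd rfl hne2
                · exact key j hj
              · rcases hj with rfl | hj
                · rw [Finset.inter_comm]; exact key i hi
                · exact hm.1.2 i hi j hj hne2
          have : insert i0 m ⊆ m := hm.2 hmem (Set.subset_insert _ _)
          exact hi0n (Set.mem_union_right _ (this (Set.mem_insert _ _)))
        · exact ⟨m, ∅, hm.1.1, hmc, by simp, hm.1.2⟩
  obtain ⟨S', R, h1, h2, h3, h4⟩ := H n d {i | i ∈ S ∧ (d i).card = n} hn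
    (fun i hi => le_of_eq hi.2)
  exact ⟨S', R, fun i hi => (h1 hi).1, h2, h3, h4⟩

noncomputable section

noncomputable section

def QAstep (S : Set Ordinal.{0}) (B : Ordinal.{0} → Finset Ordinal.{0}) (γ0 : Ordinal.{0})
    (ξ : Ordinal.{0}) (t : Ordinal.{0} → Ordinal.{0} × Ordinal.{0}) :
    Ordinal.{0} × Ordinal.{0} :=
  let γ : Ordinal.{0} := γ0 ⊔ sSup ((fun η => (t η).2) '' Set.Iio ξ)
  let P : Set Ordinal.{0} := {i | i ∈ S ∧ (∀ η < ξ, i ≠ (t η).1) ∧ ∀ x ∈ B i, γ < x}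
  let i : Ordinal.{0} := if h : P.Nonempty then h.choose else 0
  (i, (γ ⊔ (B i).sup id) + 1)

def QArec (S : Set Ordinal.{0}) (B : Ordinal.{0} → Finset Ordinal.{0}) (γ0 : Ordinal.{0}) :
    Ordinal.{0} → Ordinal.{0} × Ordinal.{0} :=
  Ordinal.lt_wf.fix fun ξ IH =>
    QAstep S B γ0 ξ (fun η => if h : η < ξ then IH η h else (0, 0))

lemma QArec_congr_aux (B : Ordinal.{0} → Finset Ordinal.{0}) {A A' : Set Ordinal.{0}}
    {g g' : Ordinal.{0}} (hA : A = A') (hg : g = g') :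
    ((if h : A.Nonempty then h.choose else 0 : Ordinal.{0}),
      (g ⊔ (B (if h : A.Nonempty then h.choose else 0)).sup id) + 1) =
    ((if h : A'.Nonempty then h.choose else 0 : Ordinal.{0}),
      (g' ⊔ (B (if h : A'.Nonempty then h.choose else 0)).sup id) + 1) := by
  subst hA; subst hg; rfl

lemma QAstep_congr (S : Set Ordinal.{0}) (B : Ordinal.{0} → Finset Ordinal.{0})
    (γ0 ξ : Ordinal.{0}) {t t' : Ordinal.{0} → Ordinal.{0} × Ordinal.{0}}
    (ht : ∀ η < ξ, t η = t' η) :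
    QAstep S B γ0 ξ t = QAstep S B γ0 ξ t' := by
  have hγ : (γ0 ⊔ sSup ((fun η => (t η).2) '' Set.Iio ξ)) =
      γ0 ⊔ sSup ((fun η => (t' η).2) '' Set.Iio ξ) := by
    rw [Set.image_congr (fun η hη => by rw [ht η hη])]
  have hP : {i | i ∈ S ∧ (∀ η < ξ, i ≠ (t η).1) ∧
        ∀ x ∈ B i, (γ0 ⊔ sSup ((fun η => (t η).2) '' Set.Iio ξ)) < x} =
      {i | i ∈ S ∧ (∀ η < ξ, i ≠ (t' η).1) ∧
        ∀ x ∈ B i, (γ0 ⊔ sSup ((fun η => (t' η).2) '' Set.Iio ξ)) < x} := by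
    ext i
    simp only [Set.mem_setOf_eq, hγ]
    constructor
    · rintro ⟨h1, h2, h3⟩
      exact ⟨h1, fun η hη => by rw [← ht η hη]; exact h2 η hη, h3⟩
    · rintro ⟨h1, h2, h3⟩
      exact ⟨h1, fun η hη => by rw [ht η hη]; exact h2 η hη, h3⟩
  unfold QAstep
  exact QArec_congr_aux B hP hγ

lemma QArec_eq (S : Set Ordinal.{0}) (B : Ordinal.{0} → Finset Ordinal.{0}) (γ0 ξ : Ordinal.{0}) :
    QArec S B γ0 ξ = QAstep S B γ0 ξ (QArec S B γ0) := by
  conv_lhs => rw [QArec, WellFounded.fix_eq]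
  rw [← QArec]
  exact QAstep_congr S B γ0 ξ (fun η hη => by rw [dif_pos hη])

def QApick (S : Set Ordinal.{0}) (B : Ordinal.{0} → Finset Ordinal.{0}) (γ0 : Ordinal.{0})
    (ξ : Ordinal.{0}) : Ordinal.{0} := (QArec S B γ0 ξ).1

def QAtop (S : Set Ordinal.{0}) (B : Ordinal.{0} → Finset Ordinal.{0}) (γ0 : Ordinal.{0})
    (ξ : Ordinal.{0}) : Ordinal.{0} := (QArec S B γ0 ξ).2

def QAgamma (S : Set Ordinal.{0}) (B : Ordinal.{0} → Finset Ordinal.{0}) (γ0 : Ordinal.{0})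
    (ξ : Ordinal.{0}) : Ordinal.{0} := γ0 ⊔ sSup (QAtop S B γ0 '' Set.Iio ξ)

def QApool (S : Set Ordinal.{0}) (B : Ordinal.{0} → Finset Ordinal.{0}) (γ0 : Ordinal.{0})
    (ξ : Ordinal.{0}) : Set Ordinal.{0} :=
  {i | i ∈ S ∧ (∀ η < ξ, i ≠ QApick S B γ0 η) ∧ ∀ x ∈ B i, QAgamma S B γ0 ξ < x}

lemma QApick_eq (S : Set Ordinal.{0}) (B : Ordinal.{0} → Finset Ordinal.{0}) (γ0 ξ : Ordinal.{0}) :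
    QApick S B γ0 ξ = if h : (QApool S B γ0 ξ).Nonempty then h.choose else 0 := by
  rw [QApick, QArec_eq]
  rfl

lemma QAtop_eq (S : Set Ordinal.{0}) (B : Ordinal.{0} → Finset Ordinal.{0}) (γ0 ξ : Ordinal.{0}) :
    QAtop S B γ0 ξ = (QAgamma S B γ0 ξ ⊔ (B (QApick S B γ0 ξ)).sup id) + 1 := by
  rw [QAtop, QArec_eq, QApick, QArec_eq]
  rfl

end

end
section Invariants

variable {S : Set Ordinal.{0}} {B : Ordinal.{0} → Finset Ordinal.{0}} {γ0 : Ordinal.{0}}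

set_option linter.unusedSectionVars false

lemma QAgamma_lt (hγ0 : γ0 < omega1) {ξ : Ordinal.{0}} (hξ : ξ < omega1)
    (htops : ∀ η < ξ, QAtop S B γ0 η < omega1) : QAgamma S B γ0 ξ < omega1 := by
  obtain ⟨b, hb1, hb2⟩ := QAaux_exists_bound ((QAaux_countable_Iio hξ).image (QAtop S B γ0))
    (by rintro x ⟨η, hη, rfl⟩; exact htops η hη)
  rw [QAgamma, sup_lt_iff]
  exact ⟨hγ0, lt_of_le_of_lt (csSup_le' (fun x hx => le_of_lt (hb2 x hx))) hb1⟩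

lemma QAtop_lt_of (hBlt : ∀ i ∈ S, ∀ x ∈ B i, x < omega1) (hγ0 : γ0 < omega1)
    {ξ : Ordinal.{0}} (hγ : QAgamma S B γ0 ξ < omega1)
    (hpick : QApick S B γ0 ξ ∈ S) : QAtop S B γ0 ξ < omega1 := by
  rw [QAtop_eq]
  refine QAaux_succ_lt ?_
  rw [sup_lt_iff]
  refine ⟨hγ, ?_⟩
  rcases Finset.eq_empty_or_nonempty (B (QApick S B γ0 ξ)) with he | hne
  · rw [he]
    simpa using lt_of_le_of_lt (zero_le (a := γ0)) hγ0
  · rw [Finset.sup_lt_iff (by simpa using lt_of_le_of_lt (zero_le (a := γ0)) hγ0)]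
    intro x hx
    exact hBlt _ hpick x hx

lemma QApool_nonempty (hS2 : ¬ S.Countable)
    (hB : ∀ i ∈ S, ∀ j ∈ S, i ≠ j → B i ∩ B j = ∅) {ξ : Ordinal.{0}} (hξ : ξ < omega1) (hγ : QAgamma S B γ0 ξ < omega1) :
    (QApool S B γ0 ξ).Nonempty := by
  have hhit : {i | i ∈ S ∧ ∃ x ∈ B i, x ∈ Set.Iic (QAgamma S B γ0 ξ)}.Countable :=
    QAaux_count_hit hB (QAaux_countable_Iic hγ)
  have hpicks : (QApick S B γ0 '' Set.Iio ξ).Countable :=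
    (QAaux_countable_Iio hξ).image _
  have hne : (S \ ({i | i ∈ S ∧ ∃ x ∈ B i, x ∈ Set.Iic (QAgamma S B γ0 ξ)} ∪
      QApick S B γ0 '' Set.Iio ξ)).Nonempty := by
    rw [Set.nonempty_iff_ne_empty]
    intro hemp
    exact QAaux_uncountable_diff hS2 (hhit.union hpicks) (by rw [hemp]; exact Set.countable_empty)
  obtain ⟨i, hiS, hin⟩ := hne
  refine ⟨i, hiS, ?_, ?_⟩
  · intro η hη hcontra
    exact hin (Set.mem_union_right _ ⟨η, hη, hcontra.symm⟩)
  · intro x hx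
    by_contra hle
    push_neg at hle
    exact hin (Set.mem_union_left _ ⟨hiS, x, hx, hle⟩)

lemma QAinv (hS2 : ¬ S.Countable) (hB : ∀ i ∈ S, ∀ j ∈ S, i ≠ j → B i ∩ B j = ∅)
    (hBlt : ∀ i ∈ S, ∀ x ∈ B i, x < omega1) (hγ0 : γ0 < omega1) : ∀ ξ < omega1, QAtop S B γ0 ξ < omega1 ∧ (QApool S B γ0 ξ).Nonempty := by
  intro ξ
  induction ξ using WellFoundedLT.induction with
  | ind ξ IH =>
    intro hξ
    have hγ : QAgamma S B γ0 ξ < omega1 :=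
      QAgamma_lt hγ0 hξ (fun η hη => (IH η hη (lt_trans hη hξ)).1)
    have hpool : (QApool S B γ0 ξ).Nonempty := QApool_nonempty hS2 hB hξ hγ
    have hpickmem : QApick S B γ0 ξ ∈ QApool S B γ0 ξ := by
      rw [QApick_eq, dif_pos hpool]
      exact hpool.choose_spec
    exact ⟨QAtop_lt_of hBlt hγ0 hγ hpickmem.1, hpool⟩

lemma QApick_mem (hS2 : ¬ S.Countable) (hB : ∀ i ∈ S, ∀ j ∈ S, i ≠ j → B i ∩ B j = ∅)
    (hBlt : ∀ i ∈ S, ∀ x ∈ B i, x < omega1) (hγ0 : γ0 < omega1) {ξ : Ordinal.{0}} (hξ : ξ < omega1) :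
    QApick S B γ0 ξ ∈ QApool S B γ0 ξ := by
  have := (QAinv hS2 hB hBlt hγ0 ξ hξ).2
  rw [QApick_eq, dif_pos this]
  exact this.choose_spec

lemma QAgamma_lt_top (ξ : Ordinal.{0}) : QAgamma S B γ0 ξ < QAtop S B γ0 ξ := by
  rw [QAtop_eq, Ordinal.add_one_eq_succ]
  exact lt_of_le_of_lt le_sup_left (Order.lt_succ _)

lemma QAsupB_lt_top (ξ : Ordinal.{0}) : (B (QApick S B γ0 ξ)).sup id < QAtop S B γ0 ξ := by
  rw [QAtop_eq, Ordinal.add_one_eq_succ]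
  exact lt_of_le_of_lt le_sup_right (Order.lt_succ _)

lemma QAtop_le_gamma {η ξ : Ordinal.{0}} (hη : η < ξ) :
    QAtop S B γ0 η ≤ QAgamma S B γ0 ξ := by
  refine le_trans (le_csSup Ordinal.bddAbove_of_small ?_) le_sup_right
  exact Set.mem_image_of_mem _ hη

lemma QAgamma_mono {η ξ : Ordinal.{0}} (hη : η ≤ ξ) :
    QAgamma S B γ0 η ≤ QAgamma S B γ0 ξ := by
  have h1 : sSup (QAtop S B γ0 '' Set.Iio η) ≤ sSup (QAtop S B γ0 '' Set.Iio ξ) :=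
    csSup_le_csSup' Ordinal.bddAbove_of_small (Set.image_mono (Set.Iio_subset_Iio hη))
  exact sup_le_sup_left h1 _

lemma QAgamma_strictmono {η ξ : Ordinal.{0}} (hη : η < ξ) :
    QAgamma S B γ0 η < QAgamma S B γ0 ξ :=
  lt_of_lt_of_le (QAgamma_lt_top η) (QAtop_le_gamma hη)

lemma QAgamma_ge_id : ∀ ξ : Ordinal.{0}, ξ ≤ QAgamma S B γ0 ξ := by
  intro ξ
  induction ξ using WellFoundedLT.induction with
  | ind ξ IH =>
    by_contra hlt
    push_neg at hlt
    have h1 : QAgamma S B γ0 ξ ≤ QAgamma S B γ0 (QAgamma S B γ0 ξ) :=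
      IH _ hlt
    have h2 : QAgamma S B γ0 (QAgamma S B γ0 ξ) < QAgamma S B γ0 ξ :=
      QAgamma_strictmono hlt
    exact absurd (lt_of_le_of_lt h1 h2) (lt_irrefl _)

lemma QAgamma_cont {ξ β : Ordinal.{0}} (hβ : β < QAgamma S B γ0 ξ) :
    β < γ0 ∨ ∃ η < ξ, β < QAtop S B γ0 η := by
  rw [QAgamma, lt_sup_iff] at hβ
  rcases hβ with h | h
  · exact Or.inl h
  · obtain ⟨x, ⟨η, hη, rfl⟩, hx⟩ := exists_lt_of_lt_csSup' h
    exact Or.inr ⟨η, hη, hx⟩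

end Invariants

section Fodor
variable {S : Set Ordinal.{0}} {B : Ordinal.{0} → Finset Ordinal.{0}} {γ0 : Ordinal.{0}}

lemma QAgamma_lt_omega1 (hS2 : ¬ S.Countable) (hB : ∀ i ∈ S, ∀ j ∈ S, i ≠ j → B i ∩ B j = ∅)
    (hBlt : ∀ i ∈ S, ∀ x ∈ B i, x < omega1) (hγ0 : γ0 < omega1)
    {ξ : Ordinal.{0}} (hξ : ξ < omega1) : QAgamma S B γ0 ξ < omega1 :=
  QAgamma_lt hγ0 hξ (fun η hη => (QAinv hS2 hB hBlt hγ0 η (lt_trans hη hξ)).1)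

lemma QAfodor (hS2 : ¬ S.Countable) (hB : ∀ i ∈ S, ∀ j ∈ S, i ≠ j → B i ∩ B j = ∅)
    (hBlt : ∀ i ∈ S, ∀ x ∈ B i, x < omega1) (hγ0 : γ0 < omega1)
    (h : Ordinal.{0} → Ordinal.{0}) (hreg : ∀ ξ < omega1, h ξ < QAgamma S B γ0 ξ) :
    ∃ β < omega1, ¬ {ξ | ξ < omega1 ∧ h ξ < β}.Countable := by
  by_contra hcon
  push_neg at hcon
  -- hcon : ∀ β < omega1, countable
  have hγlt : ∀ ξ < omega1, QAgamma S B γ0 ξ < omega1 :=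
    fun ξ hξ => QAgamma_lt_omega1 hS2 hB hBlt hγ0 hξ
  have hF : ∀ β : Ordinal.{0}, β < omega1 →
      ∃ b, b < omega1 ∧ ∀ ξ ∈ {ξ | ξ < omega1 ∧ h ξ < β}, QAgamma S B γ0 ξ + 1 < b := by
    intro β hβ
    have hc : ((fun ξ => QAgamma S B γ0 ξ + 1) '' {ξ | ξ < omega1 ∧ h ξ < β}).Countable :=
      (hcon β hβ).image _
    obtain ⟨b, hb1, hb2⟩ := QAaux_exists_bound hc (by
      rintro x ⟨ξ, hξ, rfl⟩
      exact QAaux_succ_lt (hγlt ξ hξ.1))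
    exact ⟨b, hb1, fun ξ hξ => hb2 _ (Set.mem_image_of_mem _ hξ)⟩
  classical
  set F : Ordinal.{0} → Ordinal.{0} :=
    fun β => if hb : β < omega1 then (hF β hb).choose else 0 with hFdef
  have hF1 : ∀ β, β < omega1 → F β < omega1 := by
    intro β hβ
    show (if hb : β < omega1 then (hF β hb).choose else 0) < omega1
    rw [dif_pos hβ]
    exact (hF β hβ).choose_spec.1
  have hF2 : ∀ β, (hβ : β < omega1) → ∀ ξ, ξ < omega1 → h ξ < β →
      QAgamma S B γ0 ξ + 1 < F β := by
    intro β hβ ξ h1 h2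
    show _ < (if hb : β < omega1 then (hF β hb).choose else 0)
    rw [dif_pos hβ]
    exact (hF β hβ).choose_spec.2 ξ ⟨h1, h2⟩
  set seq : ℕ → Ordinal.{0} :=
    fun n => Nat.rec 0 (fun _ ih => F (QAgamma S B γ0 ih + 1)) n with hseq
  have hseq0 : seq 0 = 0 := rfl
  have hseqS : ∀ n, seq (n+1) = F (QAgamma S B γ0 (seq n) + 1) := fun n => rfl
  have homega1pos : (0 : Ordinal.{0}) < omega1 := lt_of_le_of_lt (zero_le (a := γ0)) hγ0
  have hseqlt : ∀ n, seq n < omega1 := by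
    intro n
    induction n with
    | zero => exact homega1pos
    | succ n ih =>
      rw [hseqS]
      exact hF1 _ (QAaux_succ_lt (hγlt _ ih))
  set lam : Ordinal.{0} := sSup (Set.range seq) with hlam
  have hlamlt : lam < omega1 := by
    obtain ⟨b, hb1, hb2⟩ := QAaux_exists_bound (Set.countable_range seq)
      (by rintro x ⟨n, rfl⟩; exact hseqlt n)
    exact lt_of_le_of_lt (csSup_le' (by rintro x ⟨n, rfl⟩; exact le_of_lt (hb2 _ ⟨n, rfl⟩))) hb1
  have hseqle : ∀ n, seq n ≤ lam := by
    intro n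
    exact le_csSup Ordinal.bddAbove_of_small ⟨n, rfl⟩
  -- find n with h lam < QAgamma (seq n) + 1
  have hex : ∃ n, h lam < QAgamma S B γ0 (seq n) + 1 := by
    rcases QAgamma_cont (hreg lam hlamlt) with hc | ⟨η, hη, hc⟩
    · refine ⟨0, ?_⟩
      have : γ0 ≤ QAgamma S B γ0 (seq 0) := le_sup_left
      exact lt_of_lt_of_le hc (le_trans this (le_of_lt (by rw [Ordinal.add_one_eq_succ]; exact Order.lt_succ _)))
    · obtain ⟨x, ⟨n, rfl⟩, hx⟩ := exists_lt_of_lt_csSup (Set.range_nonempty seq) hη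
      refine ⟨n, ?_⟩
      have h2 : QAtop S B γ0 η ≤ QAgamma S B γ0 (seq n) := QAtop_le_gamma hx
      exact lt_of_lt_of_le hc (le_trans h2 (le_of_lt (by rw [Ordinal.add_one_eq_succ]; exact Order.lt_succ _)))
  obtain ⟨n, hn⟩ := hex
  have hstep : QAgamma S B γ0 lam + 1 < F (QAgamma S B γ0 (seq n) + 1) :=
    hF2 _ (QAaux_succ_lt (hγlt _ (hseqlt n))) lam hlamlt hn
  rw [← hseqS] at hstep
  have : QAgamma S B γ0 lam + 1 ≤ QAgamma S B γ0 lam :=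
    le_trans (le_of_lt hstep) (le_trans (hseqle (n+1)) (QAgamma_ge_id lam))
  exact absurd this (by rw [Ordinal.add_one_eq_succ, Order.succ_le_iff]; exact lt_irrefl _)

end Fodor


/-- Claim 8.4: the forcing `ℚ_Ā` has `ℵ₁` as a precaliber: any `ω₁`-indexed family of
conditions has an uncountable centered subfamily. -/
theorem QA_precaliber (α : Ordinal.{0} → ℕ → Ordinal.{0}) (hα : GoodSeq limOmega1 α)
    (p : Ordinal.{0} → QACond) :
    ∃ X : Set Ordinal.{0}, X ⊆ Set.Iio omega1 ∧ ¬ X.Countable ∧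
      ∀ F : Finset Ordinal.{0}, ↑F ⊆ X → ∃ q : QACond, ∀ i ∈ F, QAle α (p i) q := by
  classical
  -- the finite "domain" of each condition
  set d : Ordinal.{0} → Finset Ordinal.{0} :=
    fun i => (p i).f_finite.toFinset ∪ (p i).u with hd
  have hdmem : ∀ i x, x ∈ d i ↔ ((p i).f x ≠ none ∨ x ∈ (p i).u) := by
    intro i x
    simp [hd, Set.Finite.mem_toFinset]
  have hdlt : ∀ i, ∀ x ∈ d i, x < omega1 := by
    intro i x hx
    rcases (hdmem i x).1 hx with h | h
    · exact (p i).f_dom x h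
    · exact ((p i).u_lim x h).1
  -- Δ-system
  obtain ⟨S₁, R, hS₁sub, hS₁unc, hRsub, hΔ⟩ := QAaux_delta d QAaux_not_countable_Iio
  -- profile pigeonhole
  set g : Ordinal.{0} → ({y // y ∈ R} → Option Bool × Bool × ℚ) :=
    fun i x => ((p i).f x.val, decide (x.val ∈ (p i).u), (p i).ε x.val) with hg
  obtain ⟨v, hv⟩ := QAaux_pigeon hS₁unc g
  set S₂ := {i | i ∈ S₁ ∧ g i = v} with hS₂def
  have hS₂unc : ¬ S₂.Countable := hv
  have hS₂sub : S₂ ⊆ S₁ := fun i hi => hi.1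
  have hpat : ∀ i ∈ S₂, ∀ j ∈ S₂, ∀ x, ∀ hx : x ∈ R,
      (p i).f x = (p j).f x ∧ ((x ∈ (p i).u) ↔ (x ∈ (p j).u)) ∧ (p i).ε x = (p j).ε x := by
    intro i hi j hj x hx
    have h1 : g i = g j := hi.2.trans hj.2.symm
    have h2 := congrFun h1 ⟨x, hx⟩
    rw [hg] at h2
    simp only [Prod.mk.injEq] at h2
    exact ⟨h2.1, decide_eq_decide.1 h2.2.1, h2.2.2⟩
  have hS₂ne : S₂.Nonempty := by
    rw [Set.nonempty_iff_ne_empty]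
    intro h
    exact hS₂unc (by rw [h]; exact Set.countable_empty)
  obtain ⟨i₀, hi₀⟩ := hS₂ne
  set Ru : Finset Ordinal.{0} := R.filter (fun x => x ∈ (p i₀).u) with hRu
  set W₀ : Set Ordinal.{0} := ⋃ δ ∈ (↑Ru : Set Ordinal.{0}), Set.range (α δ) with hW₀
  have hW₀c : W₀.Countable :=
    Set.Countable.biUnion (Ru.countable_toSet) (fun δ _ => Set.countable_range _)
  set B : Ordinal.{0} → Finset Ordinal.{0} := fun i => d i \ R with hBdef
  have hBdisj : ∀ i ∈ S₂, ∀ j ∈ S₂, i ≠ j → B i ∩ B j = ∅ := by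
    intro i hi j hj hne
    rw [Finset.eq_empty_iff_forall_notMem]
    intro x hx
    rw [Finset.mem_inter, Finset.mem_sdiff, Finset.mem_sdiff] at hx
    have hmem : x ∈ d i ∩ d j := Finset.mem_inter.2 ⟨hx.1.1, hx.2.1⟩
    rw [hΔ i (hS₂sub hi) j (hS₂sub hj) hne] at hmem
    exact hx.1.2 hmem
  set Bad₀ := {i | i ∈ S₂ ∧ ∃ x ∈ B i, x ∈ W₀} with hBad₀def
  have hBad₀c : Bad₀.Countable := QAaux_count_hit hBdisj hW₀c
  set S₃ := S₂ \ Bad₀ with hS₃def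
  have hS₃unc : ¬ S₃.Countable := QAaux_uncountable_diff hS₂unc hBad₀c
  have hS₃sub₂ : S₃ ⊆ S₂ := Set.diff_subset
  have hBdisj₃ : ∀ i ∈ S₃, ∀ j ∈ S₃, i ≠ j → B i ∩ B j = ∅ :=
    fun i hi j hj hne => hBdisj i (hS₃sub₂ hi) j (hS₃sub₂ hj) hne
  have hBlt₃ : ∀ i ∈ S₃, ∀ x ∈ B i, x < omega1 :=
    fun i _ x hx => hdlt i x (Finset.mem_sdiff.1 hx).1
  have h1lt : (1 : Ordinal.{0}) < omega1 := by
    rw [QAaux_lt_omega1]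
    simp
  set pk := QApick S₃ B 1 with hpk
  set gam := QAgamma S₃ B 1 with hgam
  set tp := QAtop S₃ B 1 with htp
  have hpool : ∀ ξ, ξ < omega1 → pk ξ ∈ QApool S₃ B 1 ξ :=
    fun ξ hξ => QApick_mem hS₃unc hBdisj₃ hBlt₃ h1lt hξ
  have hpkS₃ : ∀ ξ, ξ < omega1 → pk ξ ∈ S₃ := fun ξ h => (hpool ξ h).1
  have hpkhigh : ∀ ξ, ξ < omega1 → ∀ x ∈ B (pk ξ), gam ξ < x := fun ξ h => (hpool ξ h).2.2
  have hpknew : ∀ ξ, ξ < omega1 → ∀ η < ξ, pk ξ ≠ pk η := fun ξ h => (hpool ξ h).2.1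
  have hrange_lt : ∀ δ, δ ∈ limOmega1 → ∀ x ∈ Set.range (α δ), x < δ := by
    rintro δ hδ x ⟨n, rfl⟩
    exact (hα δ hδ).2.1 n
  have hfin : ∀ δ, δ ∈ limOmega1 → ∀ c, c < δ → (Set.range (α δ) ∩ Set.Iio c).Finite := by
    intro δ hδ c hc
    obtain ⟨n₀, hn₀⟩ := (hα δ hδ).2.2 c hc
    refine Set.Finite.subset ((Set.finite_Iio n₀).image (α δ)) ?_
    rintro x ⟨⟨n, rfl⟩, hx2⟩
    refine ⟨n, ?_, rfl⟩
    simp only [Set.mem_Iio] at hx2 ⊢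
    by_contra hn
    push_neg at hn
    exact absurd hx2 (not_lt.2 (le_trans (le_of_lt hn₀) ((hα δ hδ).1.monotone hn)))
  set trF : Ordinal.{0} → Finset Ordinal.{0} := fun ξ =>
    ((p (pk ξ)).u \ R).biUnion (fun δ =>
      if h : (Set.range (α δ) ∩ Set.Iio (gam ξ)).Finite then h.toFinset else ∅) with htrF
  have hδhigh : ∀ ξ, ξ < omega1 → ∀ δ ∈ (p (pk ξ)).u \ R, gam ξ < δ ∧ δ ∈ limOmega1 := by
    intro ξ hξ δ hδ
    rw [Finset.mem_sdiff] at hδ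
    have hd1 : δ ∈ B (pk ξ) := by
      rw [hBdef]
      exact Finset.mem_sdiff.2 ⟨(hdmem _ δ).2 (Or.inr hδ.1), hδ.2⟩
    exact ⟨hpkhigh ξ hξ δ hd1, (p (pk ξ)).u_lim δ hδ.1⟩
  have htrmem : ∀ ξ, ξ < omega1 → ∀ x δ, δ ∈ (p (pk ξ)).u \ R → x ∈ Set.range (α δ) →
      x < gam ξ → x ∈ trF ξ := by
    intro ξ hξ x δ hδ hx1 hx2
    rw [htrF]
    refine Finset.mem_biUnion.2 ⟨δ, hδ, ?_⟩
    have hf : (Set.range (α δ) ∩ Set.Iio (gam ξ)).Finite :=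
      hfin δ (hδhigh ξ hξ δ hδ).2 _ (hδhigh ξ hξ δ hδ).1
    rw [dif_pos hf, Set.Finite.mem_toFinset]
    exact ⟨hx1, hx2⟩
  have htrlt : ∀ ξ, ξ < omega1 → (trF ξ).sup id < gam ξ := by
    intro ξ hξ
    have hgampos : (0 : Ordinal.{0}) < gam ξ :=
      lt_of_lt_of_le (by simp) (le_sup_left : (1 : Ordinal.{0}) ≤ _)
    rw [Finset.sup_lt_iff hgampos]
    intro b hb
    rw [htrF, Finset.mem_biUnion] at hb
    obtain ⟨δ, hδ, hbmem⟩ := hb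
    by_cases hf : (Set.range (α δ) ∩ Set.Iio (gam ξ)).Finite
    · rw [dif_pos hf, Set.Finite.mem_toFinset] at hbmem
      exact hbmem.2
    · rw [dif_neg hf] at hbmem
      exact absurd hbmem (Finset.notMem_empty b)
  obtain ⟨βs, hβs, hΞunc⟩ := QAfodor hS₃unc hBdisj₃ hBlt₃ h1lt (fun ξ => (trF ξ).sup id)
    (fun ξ hξ => htrlt ξ hξ)
  set Ξ := {ξ | ξ < omega1 ∧ (trF ξ).sup id < βs} \ Set.Iic βs with hΞdef
  have hΞunc2 : ¬ Ξ.Countable := QAaux_uncountable_diff hΞunc (QAaux_countable_Iic hβs)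
  have hΞlt : ∀ ξ ∈ Ξ, ξ < omega1 := fun ξ hξ => hξ.1.1
  set X := pk '' Ξ with hXdef
  have hXS₃ : ∀ i ∈ X, i ∈ S₃ := by
    rintro i ⟨ξ, hξ, rfl⟩
    exact hpkS₃ ξ (hΞlt ξ hξ)
  have hXsub : X ⊆ Set.Iio omega1 := fun i hi => hS₁sub (hS₂sub (hS₃sub₂ (hXS₃ i hi)))
  have hpkinj : ∀ ξ ∈ Ξ, ∀ ρ ∈ Ξ, pk ξ = pk ρ → ξ = ρ := by
    intro ξ hξ ρ hρ he
    rcases lt_trichotomy ξ ρ with h | h | h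
    · exact absurd he.symm (hpknew ρ (hΞlt ρ hρ) ξ h)
    · exact h
    · exact absurd he (hpknew ξ (hΞlt ξ hξ) ρ h)
  have hXunc : ¬ X.Countable := by
    intro hc
    have hcov : Ξ ⊆ ⋃ x ∈ X, {ξ | ξ ∈ Ξ ∧ pk ξ = x} := by
      intro ξ hξ
      exact Set.mem_biUnion (Set.mem_image_of_mem pk hξ) ⟨hξ, rfl⟩
    refine hΞunc2 ((Set.Countable.biUnion hc (fun x _ => ?_)).mono hcov)
    exact Set.Subsingleton.countable (fun ξ hξ ρ hρ => hpkinj ξ hξ.1 ρ hρ.1 (hξ.2.trans hρ.2.symm))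
  -- key pairwise property, stage version
  have hkey4s : ∀ ξ ∈ Ξ, ∀ ρ ∈ Ξ, ξ ≠ ρ → ∀ δ ∈ (p (pk ξ)).u, ∀ x ∈ Set.range (α δ),
      (p (pk ρ)).f x ≠ none → (p (pk ξ)).f x ≠ none := by
    intro ξ hξ ρ hρ hne δ hδ x hxr hxρ
    by_contra hxξ
    have hiS₂ : pk ξ ∈ S₂ := hS₃sub₂ (hpkS₃ ξ (hΞlt ξ hξ))
    have hjS₂ : pk ρ ∈ S₂ := hS₃sub₂ (hpkS₃ ρ (hΞlt ρ hρ))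
    have hxdj : x ∈ d (pk ρ) := (hdmem _ x).2 (Or.inl hxρ)
    have hxnotR : x ∉ R := by
      intro hxR
      rw [(hpat _ hiS₂ _ hjS₂ x hxR).1] at hxξ
      exact hxρ hxξ
    have hxBj : x ∈ B (pk ρ) := by
      rw [hBdef]
      exact Finset.mem_sdiff.2 ⟨hxdj, hxnotR⟩
    by_cases hδR : δ ∈ R
    · -- root δ: contradicts Bad₀ removal
      have hδRu : δ ∈ Ru := by
        rw [hRu, Finset.mem_filter]
        exact ⟨hδR, ((hpat _ hiS₂ _ hi₀ δ hδR).2.1).1 hδ⟩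
      have hxW : x ∈ W₀ := by
        rw [hW₀]
        exact Set.mem_biUnion hδRu hxr
      have : pk ρ ∈ Bad₀ := ⟨hjS₂, x, hxBj, hxW⟩
      exact (hpkS₃ ρ (hΞlt ρ hρ)).2 this
    · have hδ' : δ ∈ (p (pk ξ)).u \ R := Finset.mem_sdiff.2 ⟨hδ, hδR⟩
      have hδfacts := hδhigh ξ (hΞlt ξ hξ) δ hδ'
      have hxltδ : x < δ := hrange_lt δ hδfacts.2 x hxr
      rcases lt_trichotomy ξ ρ with hlt | heq | hgt
      · -- later stage ρ: its B-elements are above δ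
        have h1 : gam ρ < x := hpkhigh ρ (hΞlt ρ hρ) x hxBj
        have h2 : δ ∈ B (pk ξ) := by
          rw [hBdef]
          rw [Finset.mem_sdiff] at hδ' ⊢
          exact ⟨(hdmem _ δ).2 (Or.inr hδ'.1), hδ'.2⟩
        have h3 : δ ≤ (B (pk ξ)).sup id := Finset.le_sup (f := id) h2
        have h4 : (B (pk ξ)).sup id < tp ξ := QAsupB_lt_top ξ
        have h5 : tp ξ ≤ gam ρ := QAtop_le_gamma hlt
        exact absurd (lt_trans (lt_of_le_of_lt (le_trans h3 (le_of_lt h4)) (lt_of_le_of_lt h5 h1)) hxltδ) (lt_irrefl δ)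
      · exact hne heq
      · -- earlier stage ρ: x lands in the trace of ξ, below βs, but x > gam ρ > βs
        have h1 : gam ρ < x := hpkhigh ρ (hΞlt ρ hρ) x hxBj
        have h2 : x ≤ (B (pk ρ)).sup id := Finset.le_sup (f := id) hxBj
        have h3 : (B (pk ρ)).sup id < tp ρ := QAsupB_lt_top ρ
        have h4 : tp ρ ≤ gam ξ := QAtop_le_gamma hgt
        have hxgam : x < gam ξ := lt_of_le_of_lt h2 (lt_of_lt_of_le h3 h4)
        have hxtr : x ∈ trF ξ := htrmem ξ (hΞlt ξ hξ) x δ hδ' hxr hxgam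
        have hxle : x ≤ (trF ξ).sup id := Finset.le_sup (f := id) hxtr
        have hxβs : x < βs := lt_of_le_of_lt hxle hξ.1.2
        have hρβs : βs < ρ := by
          have := hρ.2
          simpa using this
        have hρgam : ρ ≤ gam ρ := QAgamma_ge_id ρ
        exact absurd (lt_trans (lt_of_le_of_lt hρgam h1) hxβs) (not_lt.2 (le_of_lt hρβs))
  -- pairwise properties for members of X
  have hmemX : ∀ i ∈ X, ∃ ξ ∈ Ξ, pk ξ = i := by
    rintro i ⟨ξ, hξ, rfl⟩
    exact ⟨ξ, hξ, rfl⟩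
  have hkey4 : ∀ i ∈ X, ∀ j ∈ X, i ≠ j → ∀ δ ∈ (p i).u, ∀ x ∈ Set.range (α δ),
      (p j).f x ≠ none → (p i).f x ≠ none := by
    intro i hi j hj hne δ hδ x hx hj2
    obtain ⟨ξ, hξ, rfl⟩ := hmemX i hi
    obtain ⟨ρ, hρ, rfl⟩ := hmemX j hj
    exact hkey4s ξ hξ ρ hρ (fun h => hne (by rw [h])) δ hδ x hx hj2
  have hXS₂ : ∀ i ∈ X, i ∈ S₂ := fun i hi => hS₃sub₂ (hXS₃ i hi)
  have hkey1 : ∀ i ∈ X, ∀ j ∈ X, i ≠ j → ∀ x, (p i).f x ≠ none → (p j).f x ≠ none →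
      (p i).f x = (p j).f x := by
    intro i hi j hj hne x h1 h2
    have hxR : x ∈ R := by
      have hm : x ∈ d i ∩ d j :=
        Finset.mem_inter.2 ⟨(hdmem i x).2 (Or.inl h1), (hdmem j x).2 (Or.inl h2)⟩
      rwa [hΔ i (hS₂sub (hXS₂ i hi)) j (hS₂sub (hXS₂ j hj)) hne] at hm
    exact (hpat i (hXS₂ i hi) j (hXS₂ j hj) x hxR).1
  have hkey2 : ∀ i ∈ X, ∀ j ∈ X, i ≠ j → ∀ δ, δ ∈ (p i).u → δ ∈ (p j).u →
      (p i).ε δ = (p j).ε δ := by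
    intro i hi j hj hne δ h1 h2
    have hδR : δ ∈ R := by
      have hm : δ ∈ d i ∩ d j :=
        Finset.mem_inter.2 ⟨(hdmem i δ).2 (Or.inr h1), (hdmem j δ).2 (Or.inr h2)⟩
      rwa [hΔ i (hS₂sub (hXS₂ i hi)) j (hS₂sub (hXS₂ j hj)) hne] at hm
    exact (hpat i (hXS₂ i hi) j (hXS₂ j hj) δ hδR).2.2
  refine ⟨X, hXsub, hXunc, ?_⟩
  intro F hF
  -- construct the common extension q
  set qf : Ordinal.{0} → Option Bool := fun x =>
    if h : ∃ i, i ∈ F ∧ (p i).f x ≠ none then (p h.choose).f x else none with hqf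
  have hqfval : ∀ x, qf x ≠ none → ∃ i, i ∈ F ∧ (p i).f x ≠ none ∧ qf x = (p i).f x := by
    intro x hx
    by_cases h : ∃ i, i ∈ F ∧ (p i).f x ≠ none
    · obtain ⟨h1, h2⟩ := h.choose_spec
      refine ⟨h.choose, h1, h2, ?_⟩
      simp only [hqf]
      rw [dif_pos h]
    · exfalso
      apply hx
      simp only [hqf]
      rw [dif_neg h]
  have hqfext : ∀ i ∈ F, ∀ x, (p i).f x ≠ none → qf x = (p i).f x := by
    intro i hi x hx
    have hex : ∃ i, i ∈ F ∧ (p i).f x ≠ none := ⟨i, hi, hx⟩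
    simp only [hqf]
    rw [dif_pos hex]
    obtain ⟨h1, h2⟩ := hex.choose_spec
    by_cases he : hex.choose = i
    · rw [he]
    · exact hkey1 _ (hF h1) _ (hF hi) he x h2 hx
  set qu : Finset Ordinal.{0} := F.biUnion (fun i => (p i).u) with hqu
  set qε : Ordinal.{0} → ℚ := fun δ =>
    if h : ∃ i, i ∈ F ∧ δ ∈ (p i).u then (p h.choose).ε δ else 1/2 with hqε
  have hqεval : ∀ i ∈ F, ∀ δ ∈ (p i).u, qε δ = (p i).ε δ := by
    intro i hi δ hδ
    have hex : ∃ i, i ∈ F ∧ δ ∈ (p i).u := ⟨i, hi, hδ⟩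
    simp only [hqε]
    rw [dif_pos hex]
    obtain ⟨h1, h2⟩ := hex.choose_spec
    by_cases he : hex.choose = i
    · rw [he]
    · exact hkey2 _ (hF h1) _ (hF hi) he δ h2 hδ
  have hqfin : {x | qf x ≠ none}.Finite := by
    refine Set.Finite.subset (Set.Finite.biUnion F.finite_toSet
      (fun i _ => (p i).f_finite)) ?_
    intro x hx
    obtain ⟨i, hi1, hi2, _⟩ := hqfval x hx
    exact Set.mem_biUnion hi1 hi2
  refine ⟨⟨qf, qu, qε, hqfin, ?_, ?_, ?_, ?_⟩, ?_⟩
  · intro x hx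
    obtain ⟨i, _, hi2, _⟩ := hqfval x hx
    exact (p i).f_dom x hi2
  · intro δ hδ
    rw [hqu, Finset.mem_biUnion] at hδ
    obtain ⟨i, _, hi2⟩ := hδ
    exact (p i).u_lim δ hi2
  · intro δ hδ
    rw [hqu, Finset.mem_biUnion] at hδ
    obtain ⟨i, hi1, hi2⟩ := hδ
    rw [hqεval i hi1 δ hi2]
    exact (p i).ε_pos δ hi2
  · intro δ hδ
    rw [hqu, Finset.mem_biUnion] at hδ
    obtain ⟨i, hi1, hi2⟩ := hδ
    rw [hqεval i hi1 δ hi2]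
    exact (p i).ε_lt_one δ hi2
  · -- q extends every p i, i ∈ F
    intro i hi
    refine ⟨fun x hx => hqfext i hi x hx, ?_, fun δ hδ => hqεval i hi δ hδ, ?_⟩
    · intro δ hδ
      exact Finset.mem_biUnion.2 ⟨i, hi, hδ⟩
    · intro δ hδ N
      left
      rw [Finset.filter_eq_empty_iff]
      intro n _
      rintro ⟨hq, hpn⟩
      obtain ⟨j, hj1, hj2, _⟩ := hqfval _ hq
      by_cases hji : j = i
      · rw [hji] at hj2
        exact hj2 hpn
      · have := hkey4 i (hF hi) j (hF hj1) (fun h => hji (h.symm)) δ hδ (α δ n) ⟨n, rfl⟩ hj2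
        exact this hpn
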